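/- arXiv:2011.03774 — 2 statements merged into one kernel-verified Lean document; each statement's English description precedes it below -/
import Mathlib

section
/- For all vectors a, b in ℝ^N and every real r ≥ 2, |b|^r ≥ |a|^r + r|a|^{r-2} a·(b-a) + 2^{1-r}|a-b|^r, where |·| is the Euclidean norm and · the Euclidean inner product. -/
open Real
open scoped RealInnerProductSpace

/-- Scalar gradient inequality: `s^r + r s^(r-1) (t-s) ≤ t^r` for `s > 0`, `t ≥ 0`, `r ≥ 1`. -/
lemma aux_bernoulli {s t r : ℝ} (hs : 0 < s) (ht : 0 ≤ t) (hr : 1 ≤ r) :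
    s ^ r + r * s ^ (r - 1) * (t - s) ≤ t ^ r := by
  have hx : (-1 : ℝ) ≤ t / s - 1 := by
    have : 0 ≤ t / s := div_nonneg ht hs.le
    linarith
  have h := one_add_mul_self_le_rpow_one_add hx hr
  have h1 : (1 : ℝ) + (t / s - 1) = t / s := by ring
  rw [h1, Real.div_rpow ht hs.le] at h
  have hsr : (0 : ℝ) < s ^ r := Real.rpow_pos_of_pos hs r
  have h2 : s ^ r * (1 + r * (t / s - 1)) ≤ t ^ r := by
    calc s ^ r * (1 + r * (t / s - 1)) ≤ s ^ r * (t ^ r / s ^ r) :=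
          mul_le_mul_of_nonneg_left h hsr.le
      _ = t ^ r := by field_simp
  have hexp : s ^ r * (1 + r * (t / s - 1)) = s ^ r + r * s ^ (r - 1) * (t - s) := by
    have h3 : s ^ (r - 1) = s ^ r / s := by rw [Real.rpow_sub hs, Real.rpow_one]
    rw [h3]
    field_simp
  linarith [h2, hexp.symm.le, hexp.le]

/-- `x^r + y^r ≤ (x^2 + y^2)^(r/2)` for `x, y ≥ 0`, `r ≥ 2`. -/
lemma aux_lp_le_l2 {x y r : ℝ} (hx : 0 ≤ x) (hy : 0 ≤ y) (hr : 2 ≤ r) :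
    x ^ r + y ^ r ≤ (x ^ 2 + y ^ 2) ^ (r / 2) := by
  set s : ℝ := Real.sqrt (x ^ 2 + y ^ 2) with hsdef
  have hs0 : 0 ≤ s := Real.sqrt_nonneg _
  have hs2 : s ^ 2 = x ^ 2 + y ^ 2 := Real.sq_sqrt (by positivity)
  have hxs : x ≤ s := by
    nlinarith [hs2]
  have hys : y ≤ s := by
    nlinarith [hs2]
  have hsplit : ∀ z : ℝ, 0 ≤ z → z ^ r = z ^ (2 : ℝ) * z ^ (r - 2) := by
    intro z hz
    rw [← Real.rpow_add' hz (by linarith : (2 : ℝ) + (r - 2) ≠ 0)]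
    norm_num
  have hx2 : x ^ (2 : ℝ) = x ^ 2 := by
    rw [show (2 : ℝ) = ((2 : ℕ) : ℝ) by norm_num, Real.rpow_natCast]
  have hy2 : y ^ (2 : ℝ) = y ^ 2 := by
    rw [show (2 : ℝ) = ((2 : ℕ) : ℝ) by norm_num, Real.rpow_natCast]
  have hs2' : s ^ (2 : ℝ) = s ^ 2 := by
    rw [show (2 : ℝ) = ((2 : ℕ) : ℝ) by norm_num, Real.rpow_natCast]
  have hmono_x : x ^ (r - 2) ≤ s ^ (r - 2) :=
    Real.rpow_le_rpow hx hxs (by linarith)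
  have hmono_y : y ^ (r - 2) ≤ s ^ (r - 2) :=
    Real.rpow_le_rpow hy hys (by linarith)
  have hsr : s ^ r = (x ^ 2 + y ^ 2) ^ (r / 2) := by
    rw [hsdef, Real.sqrt_eq_rpow, ← Real.rpow_mul (by positivity),
      show (1/2) * r = r / 2 by ring]
  calc x ^ r + y ^ r = x ^ 2 * x ^ (r - 2) + y ^ 2 * y ^ (r - 2) := by
        rw [← hx2, ← hy2, ← hsplit x hx, ← hsplit y hy]
    _ ≤ x ^ 2 * s ^ (r - 2) + y ^ 2 * s ^ (r - 2) := by
        gcongr <;> positivity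
    _ = s ^ 2 * s ^ (r - 2) := by rw [hs2]; ring
    _ = s ^ r := by rw [← hs2', ← hsplit s hs0]
    _ = (x ^ 2 + y ^ 2) ^ (r / 2) := hsr

/-- Two-point power mean inequality. -/
lemma aux_pm {u v p : ℝ} (hu : 0 ≤ u) (hv : 0 ≤ v) (hp : 1 ≤ p) :
    ((u + v) / 2) ^ p ≤ (u ^ p + v ^ p) / 2 := by
  have h := (convexOn_rpow hp).2 (Set.mem_Ici.mpr hu) (Set.mem_Ici.mpr hv)
    (by norm_num : (0:ℝ) ≤ 1/2) (by norm_num : (0:ℝ) ≤ 1/2) (by norm_num)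
  simp only [smul_eq_mul] at h
  have h1 : (u + v) / 2 = 1/2 * u + 1/2 * v := by ring
  rw [h1]
  linarith

theorem stmt_1 (N : ℕ) (hN : 1 ≤ N) (a b : EuclideanSpace ℝ (Fin N)) (r : ℝ) (hr : 2 ≤ r) :
    ‖a‖ ^ r + r * ‖a‖ ^ (r - 2) * ⟪a, b - a⟫ + 2 ^ (1 - r) * ‖a - b‖ ^ r ≤ ‖b‖ ^ r := by
  set m : EuclideanSpace ℝ (Fin N) := (2:ℝ)⁻¹ • (a + b) with hm
  -- gradient inequality at the midpoint
  have key1 : ‖a‖ ^ r + r * ‖a‖ ^ (r - 2) * ⟪a, m - a⟫ ≤ ‖m‖ ^ r := by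
    rcases eq_or_ne a 0 with ha | ha
    · subst ha
      simp only [inner_zero_left, mul_zero, norm_zero, add_zero]
      rw [Real.zero_rpow (by linarith : r ≠ 0)]
      positivity
    · have hs : 0 < ‖a‖ := norm_pos_iff.mpr ha
      have hinner : ⟪a, m - a⟫ ≤ ‖a‖ * ‖m‖ - ‖a‖ ^ 2 := by
        rw [inner_sub_right]
        have h1 : ⟪a, m⟫ ≤ ‖a‖ * ‖m‖ := real_inner_le_norm a m
        have h2 : ⟪a, a⟫ = ‖a‖ ^ 2 := real_inner_self_eq_norm_sq a
        linarith
      have hcoef : 0 ≤ r * ‖a‖ ^ (r - 2) := by positivity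
      have step : r * ‖a‖ ^ (r - 2) * ⟪a, m - a⟫ ≤
          r * ‖a‖ ^ (r - 1) * (‖m‖ - ‖a‖) := by
        have h3 : ‖a‖ ^ (r - 1) = ‖a‖ ^ (r - 2) * ‖a‖ := by
          rw [show r - 1 = (r - 2) + 1 by ring, Real.rpow_add hs, Real.rpow_one]
        calc r * ‖a‖ ^ (r - 2) * ⟪a, m - a⟫
            ≤ r * ‖a‖ ^ (r - 2) * (‖a‖ * ‖m‖ - ‖a‖ ^ 2) :=
              mul_le_mul_of_nonneg_left hinner hcoef
          _ = r * ‖a‖ ^ (r - 1) * (‖m‖ - ‖a‖) := by rw [h3]; ring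
      have hb := aux_bernoulli hs (norm_nonneg m) (by linarith : 1 ≤ r)
      linarith
  -- Clarkson-type inequality
  have key2 : ‖m‖ ^ r + ‖(2:ℝ)⁻¹ • (a - b)‖ ^ r ≤ (‖a‖ ^ r + ‖b‖ ^ r) / 2 := by
    set x := ‖m‖ with hx
    set y := ‖(2:ℝ)⁻¹ • (a - b)‖ with hy
    have hpar : x ^ 2 + y ^ 2 = (‖a‖ ^ 2 + ‖b‖ ^ 2) / 2 := by
      have hp := parallelogram_law_with_norm ℝ a b
      have hxv : x = 2⁻¹ * ‖a + b‖ := by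
        rw [hx, hm, norm_smul]; simp
      have hyv : y = 2⁻¹ * ‖a - b‖ := by
        rw [hy, norm_smul]; simp
      rw [hxv, hyv]
      nlinarith [hp]
    have h1 : x ^ r + y ^ r ≤ (x ^ 2 + y ^ 2) ^ (r / 2) :=
      aux_lp_le_l2 (norm_nonneg _) (norm_nonneg _) hr
    have h2 : ((‖a‖ ^ 2 + ‖b‖ ^ 2) / 2) ^ (r / 2) ≤
        ((‖a‖ ^ 2) ^ (r / 2) + (‖b‖ ^ 2) ^ (r / 2)) / 2 :=
      aux_pm (by positivity) (by positivity) (by linarith)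
    have hc : ∀ z : ℝ, 0 ≤ z → (z ^ 2) ^ (r / 2) = z ^ r := by
      intro z hz
      rw [← Real.rpow_natCast z 2, ← Real.rpow_mul hz,
        show ((2:ℕ):ℝ) * (r / 2) = r by push_cast; ring]
    rw [hc _ (norm_nonneg a), hc _ (norm_nonneg b)] at h2
    rw [hpar] at h1
    linarith
  -- rewrite the pieces and combine
  have hmid : ⟪a, m - a⟫ = 2⁻¹ * ⟪a, b - a⟫ := by
    have : m - a = (2:ℝ)⁻¹ • (b - a) := by
      rw [hm]; module
    rw [this, real_inner_smul_right]
  have hdist : ‖(2:ℝ)⁻¹ • (a - b)‖ ^ r = 2 ^ (-r) * ‖a - b‖ ^ r := by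
    rw [norm_smul]
    simp only [norm_inv, Real.norm_ofNat]
    rw [Real.mul_rpow (by positivity) (norm_nonneg _),
      Real.inv_rpow (by norm_num : (0:ℝ) ≤ 2), ← Real.rpow_neg (by norm_num : (0:ℝ) ≤ 2)]
  have hpow : (2:ℝ) ^ (1 - r) = 2 * 2 ^ (-r) := by
    rw [show (1 - r : ℝ) = 1 + (-r) by ring, Real.rpow_add (by norm_num), Real.rpow_one]
  rw [hmid] at key1
  rw [hdist] at key2
  rw [hpow]
  linarith
end

section
/- Let F : ℝ^N → [0,∞) be positively homogeneous of degree one (F(tx) = t F(x) for t > 0), convex, smooth away from 0, with F(x) > 0 for x ≠ 0. If F satisfies the uniform convexity inequality F²((ξ+β)/2) ≤ (F²(ξ)+F²(β))/2 − (l/4) F²(β−ξ) for some constant l ≥ 0 and all ξ, β ∈ ℝ^N, then for every r ≥ 2 and all ξ, β ∈ ℝ^N (with ξ ≠ 0) one has F^r(β) ≥ F^r(ξ) + r F^{r-1}(ξ) ∇F(ξ)·(β−ξ) + (l^{r/2}/2^{r-1}) F^r(β−ξ). -/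
open Real

-- superadditivity of rpow
lemma aux_rpow_superadd {x y p : ℝ} (hx : 0 ≤ x) (hy : 0 ≤ y) (hp : 1 ≤ p) :
    x ^ p + y ^ p ≤ (x + y) ^ p := by
  have h := NNReal.add_rpow_le_rpow_add x.toNNReal y.toNNReal hp
  have h2 := NNReal.coe_le_coe.2 h
  rw [← Real.toNNReal_add hx hy] at h2
  simpa [NNReal.coe_rpow, Real.coe_toNNReal x hx, Real.coe_toNNReal y hy,
    Real.coe_toNNReal (x + y) (by linarith)] using h2

-- tangent line inequality for rpow
lemma aux_tangent {a b p : ℝ} (hb : 0 < b) (ha : 0 ≤ a) (hp : 1 ≤ p) :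
    b ^ p + p * b ^ (p - 1) * (a - b) ≤ a ^ p := by
  have hz : (-1 : ℝ) ≤ a / b - 1 := by
    have : 0 ≤ a / b := div_nonneg ha hb.le
    linarith
  have hber := one_add_mul_self_le_rpow_one_add hz hp
  have heq : 1 + (a / b - 1) = a / b := by ring
  rw [heq] at hber
  have hdiv : (a / b) ^ p = a ^ p / b ^ p := Real.div_rpow ha hb.le p
  rw [hdiv] at hber
  have hbp : 0 < b ^ p := Real.rpow_pos_of_pos hb p
  have hb' : b ≠ 0 := hb.ne'
  have hc : b ^ p = b ^ (p - 1) * b := by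
    rw [← Real.rpow_add_one hb' (p - 1)]
    norm_num
  have key : b ^ p * (1 + p * (a / b - 1)) ≤ a ^ p := by
    calc b ^ p * (1 + p * (a / b - 1)) ≤ b ^ p * (a ^ p / b ^ p) := by
          exact mul_le_mul_of_nonneg_left hber hbp.le
      _ = a ^ p := by field_simp
  have hexp : b ^ p * (1 + p * (a / b - 1)) = b ^ p + p * b ^ (p - 1) * (a - b) := by
    rw [hc]; field_simp
  linarith [hexp ▸ key]

-- subgradient inequality
lemma aux_subgrad {N : ℕ} {F : EuclideanSpace ℝ (Fin N) → ℝ}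
    (hFconv : ConvexOn ℝ Set.univ F) {x : EuclideanSpace ℝ (Fin N)}
    (hd : DifferentiableAt ℝ F x) (y : EuclideanSpace ℝ (Fin N)) :
    F x + fderiv ℝ F x (y - x) ≤ F y := by
  set v := y - x with hv
  set g : ℝ → ℝ := fun t => F (x + t • v) with hg
  have h1 : HasDerivAt (fun t : ℝ => x + t • v) v 0 := by
    simpa using ((hasDerivAt_id (0 : ℝ)).smul_const v).const_add x
  have h0 : x + (0 : ℝ) • v = x := by simp
  have hF' : HasFDerivAt F (fderiv ℝ F x) (x + (0 : ℝ) • v) := by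
    rw [h0]; exact hd.hasFDerivAt
  have hgd : HasDerivAt g ((fderiv ℝ F x) v) 0 := hF'.comp_hasDerivAt 0 h1
  have hslope : ∀ t ∈ Set.Ioo (0:ℝ) 1, slope g 0 t ≤ F y - F x := by
    intro t ht
    have hconv := hFconv.2 (Set.mem_univ x) (Set.mem_univ y)
      (by linarith [ht.2] : (0:ℝ) ≤ 1 - t) ht.1.le (by ring)
    have hpt : (1 - t) • x + t • y = x + t • v := by rw [hv]; module
    rw [hpt] at hconv
    have hg0 : g 0 = F x := by simp [hg]
    have hgt : g t ≤ (1 - t) * F x + t * F y := by simpa [smul_eq_mul] using hconv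
    have hs1 : slope g 0 t = (g t - g 0) / t := by rw [slope_def_field]; ring_nf
    rw [hs1, div_le_iff₀ ht.1]
    nlinarith [hgt, hg0]
  have htend : Filter.Tendsto (slope g 0) (nhdsWithin 0 (Set.Ioi 0))
      (nhds ((fderiv ℝ F x) v)) :=
    (hasDerivAt_iff_tendsto_slope.1 hgd).mono_left
      (nhdsWithin_mono 0 (fun z hz => ne_of_gt hz))
  have hev : ∀ᶠ t in nhdsWithin 0 (Set.Ioi 0), slope g 0 t ≤ F y - F x := by
    filter_upwards [Ioo_mem_nhdsGT_of_mem (by norm_num : (0:ℝ) ∈ Set.Ico 0 1)] with t ht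
    exact hslope t ht
  have hle : (fderiv ℝ F x) v ≤ F y - F x := le_of_tendsto htend hev
  linarith

theorem stmt_2 (N : ℕ) (F : EuclideanSpace ℝ (Fin N) → ℝ) (l : ℝ) (hl : 0 ≤ l)
    (hFnonneg : ∀ x, 0 ≤ F x)
    (hFhom : ∀ (t : ℝ), 0 < t → ∀ x, F (t • x) = t * F x)
    (hFconv : ConvexOn ℝ Set.univ F)
    (hFdiff : ∀ x : EuclideanSpace ℝ (Fin N), x ≠ 0 → DifferentiableAt ℝ F x)
    (hFpos : ∀ x : EuclideanSpace ℝ (Fin N), x ≠ 0 → 0 < F x)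
    (hUC : ∀ ξ β : EuclideanSpace ℝ (Fin N),
      F ((1 / 2 : ℝ) • (ξ + β)) ^ (2:ℝ)
        ≤ (F ξ ^ (2:ℝ) + F β ^ (2:ℝ)) / 2 - l / 4 * F (β - ξ) ^ (2:ℝ))
    (r : ℝ) (hr : 2 ≤ r) (ξ β : EuclideanSpace ℝ (Fin N)) (hξ : ξ ≠ 0) :
    F ξ ^ r + r * F ξ ^ (r - 1) * fderiv ℝ F ξ (β - ξ)
      + l ^ (r / 2) / 2 ^ (r - 1) * F (β - ξ) ^ r ≤ F β ^ r := by
  have hA : 0 < F ξ := hFpos ξ hξ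
  have hs : (1:ℝ) ≤ r / 2 := by linarith
  set m := (1 / 2 : ℝ) • (ξ + β) with hmdef
  set E := F (β - ξ) with hEdef
  have hE0 : 0 ≤ E := hFnonneg _
  have hB0 : 0 ≤ F β := hFnonneg _
  have hM0 : 0 ≤ F m := hFnonneg _
  -- subgradient at ξ evaluated at m
  have hsub := aux_subgrad hFconv (hFdiff ξ hξ) m
  have hmξ : m - ξ = (1 / 2 : ℝ) • (β - ξ) := by rw [hmdef]; module
  have hlin : (fderiv ℝ F ξ) (m - ξ) = (1 / 2) * (fderiv ℝ F ξ) (β - ξ) := by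
    rw [hmξ, map_smul, smul_eq_mul]
  rw [hlin] at hsub
  -- Step B: tangent line for F^r at ξ
  have htan := aux_tangent hA hM0 (by linarith : (1:ℝ) ≤ r)
  have hpow1 : 0 ≤ r * F ξ ^ (r - 1) := by positivity
  have hstepB : F ξ ^ r + r * F ξ ^ (r - 1) * ((1 / 2) * (fderiv ℝ F ξ) (β - ξ))
      ≤ F m ^ r := by nlinarith [mul_le_mul_of_nonneg_left (by linarith [hsub] :
        (1 / 2) * (fderiv ℝ F ξ) (β - ξ) ≤ F m - F ξ) hpow1]
  -- Step C: uniform convexity chain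
  have hUCi := hUC ξ β
  have hM2 : (0:ℝ) ≤ F m ^ (2:ℝ) := Real.rpow_nonneg hM0 _
  set X := (F ξ ^ (2:ℝ) + F β ^ (2:ℝ)) / 2 with hXdef
  set Y := l / 4 * E ^ (2:ℝ) with hYdef
  have hY0 : 0 ≤ Y := by
    have : (0:ℝ) ≤ E ^ (2:ℝ) := Real.rpow_nonneg hE0 _
    positivity
  have hXY : 0 ≤ X - Y := le_trans hM2 hUCi
  have sq : ∀ a : ℝ, 0 ≤ a → (a ^ (2:ℝ)) ^ (r/2) = a ^ r := by
    intro a ha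
    rw [← Real.rpow_mul ha]
    congr 1
    ring
  have hmono : (F m ^ (2:ℝ)) ^ (r/2) ≤ (X - Y) ^ (r/2) :=
    Real.rpow_le_rpow hM2 hUCi (by linarith)
  have hsuper : (X - Y) ^ (r/2) + Y ^ (r/2) ≤ X ^ (r/2) := by
    have := aux_rpow_superadd hXY hY0 hs
    rwa [sub_add_cancel] at this
  -- midpoint: X^(r/2) ≤ (Fξ^r + Fβ^r)/2
  have hmid : X ^ (r/2) ≤ (F ξ ^ r + F β ^ r) / 2 := by
    have ha : F ξ ^ (2:ℝ) ∈ Set.Ici (0:ℝ) := Real.rpow_nonneg hA.le _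
    have hb : F β ^ (2:ℝ) ∈ Set.Ici (0:ℝ) := Real.rpow_nonneg hB0 _
    have h := (convexOn_rpow hs).2 ha hb (by norm_num : (0:ℝ) ≤ 1/2)
      (by norm_num : (0:ℝ) ≤ 1/2) (by norm_num)
    simp only [smul_eq_mul] at h
    rw [hXdef]
    calc ((F ξ ^ (2:ℝ) + F β ^ (2:ℝ)) / 2) ^ (r/2)
        = (1/2 * F ξ ^ (2:ℝ) + 1/2 * F β ^ (2:ℝ)) ^ (r/2) := by ring_nf
      _ ≤ 1/2 * (F ξ ^ (2:ℝ)) ^ (r/2) + 1/2 * (F β ^ (2:ℝ)) ^ (r/2) := h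
      _ = (F ξ ^ r + F β ^ r) / 2 := by
          rw [sq _ hA.le, sq _ hB0]; ring
  -- Y^(r/2) = l^(r/2)/2^r * E^r
  have hYpow : Y ^ (r/2) = l ^ (r/2) / 2 ^ r * E ^ r := by
    have hE2 : (0:ℝ) ≤ E ^ (2:ℝ) := Real.rpow_nonneg hE0 _
    rw [hYdef, Real.mul_rpow (by positivity) hE2, sq _ hE0,
      Real.div_rpow hl (by norm_num : (0:ℝ) ≤ 4)]
    have h42 : (4:ℝ) ^ (r/2) = 2 ^ r := by
      rw [show (4:ℝ) = (2:ℝ) ^ (2:ℕ) by norm_num, ← Real.rpow_natCast (2:ℝ) 2,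
        ← Real.rpow_mul (by norm_num : (0:ℝ) ≤ 2)]
      congr 1
      push_cast
      ring
    rw [h42]
  -- combine
  have hFmr : F m ^ r = (F m ^ (2:ℝ)) ^ (r/2) := (sq _ hM0).symm
  have hchain : F m ^ r ≤ (F ξ ^ r + F β ^ r) / 2 - l ^ (r/2) / 2 ^ r * E ^ r := by
    rw [hFmr, ← hYpow]
    linarith [hmono, hsuper, hmid]
  have h2r : (2:ℝ) ^ r = 2 ^ (r - 1) * 2 := by
    rw [← Real.rpow_add_one (by norm_num : (2:ℝ) ≠ 0) (r-1)]
    norm_num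
  have h2r1 : (0:ℝ) < 2 ^ (r - 1) := Real.rpow_pos_of_pos (by norm_num) _
  have hconst : 2 * (l ^ (r/2) / 2 ^ r * E ^ r) = l ^ (r/2) / 2 ^ (r-1) * E ^ r := by
    rw [h2r]; field_simp
  linarith [hstepB, hchain]
end
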